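/- arXiv:0901.1390 — 3 statements merged into one kernel-verified Lean document; each statement's English description precedes it below -/
import Mathlib

section
/- For every b > 0, with g_b(x) = ∑_{k=0}^∞ x^k/(k!·Γ(k+b)) on (0,∞), the function x ↦ x^b·g_b'(x) is differentiable on (0,∞) and its derivative at x equals x^{b−1}·g_b(x). -/
noncomputable section

open Real

/-- `g_b(x) = ∑_{k=0}^∞ x^k/(k!·Γ(k+b))`. -/
def gFun (b : ℝ) (x : ℝ) : ℝ :=
  ∑' k : ℕ, x ^ k / ((k.factorial : ℝ) * Real.Gamma ((k : ℝ) + b))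

lemma gammaPos (b : ℝ) (hb : 0 < b) (n : ℕ) : 0 < Real.Gamma ((n : ℝ) + b) :=
  Real.Gamma_pos_of_pos (by positivity)

lemma facPos (n : ℕ) : (0 : ℝ) < (n.factorial : ℝ) := by
  exact_mod_cast n.factorial_pos

lemma abs_term (x c : ℝ) (hc : 0 < c) (n : ℕ) :
    |x ^ n / c| = |x| ^ n / c := by
  rw [abs_div, abs_pow, abs_of_pos hc]

lemma abs_term' (x c : ℝ) (hc : 0 < c) (n : ℕ) :
    |(n : ℝ) * x ^ (n - 1) / c| = (n : ℝ) * |x| ^ (n - 1) / c := by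
  rw [abs_div, abs_mul, abs_pow, Nat.abs_cast, abs_of_pos hc]

lemma gamma_lb (b : ℝ) (hb : 0 < b) (n : ℕ) :
    min (Real.Gamma b) (b * Real.Gamma b) ≤ Real.Gamma ((n : ℝ) + b) := by
  induction n with
  | zero => simpa using min_le_left _ _
  | succ n ih =>
      have h1 : ((n : ℝ) + 1 + b) = ((n : ℝ) + b) + 1 := by ring
      have hpos : (0 : ℝ) < (n : ℝ) + b := by positivity
      rw [Nat.cast_succ, h1, Real.Gamma_add_one hpos.ne']
      rcases Nat.eq_zero_or_pos n with h | h
      · subst h; simp [min_le_right]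
      · have h1n : (1 : ℝ) ≤ (n : ℝ) + b := by
          have : (1 : ℝ) ≤ (n : ℝ) := by exact_mod_cast h
          linarith
        calc min (Real.Gamma b) (b * Real.Gamma b) ≤ Real.Gamma ((n : ℝ) + b) := ih
          _ = 1 * Real.Gamma ((n : ℝ) + b) := (one_mul _).symm
          _ ≤ ((n : ℝ) + b) * Real.Gamma ((n : ℝ) + b) :=
              mul_le_mul_of_nonneg_right h1n (Real.Gamma_pos_of_pos hpos).le

lemma key_summable (b : ℝ) (hb : 0 < b) (R : ℝ) :
    Summable (fun n : ℕ => |R| ^ n / ((n.factorial : ℝ) * Real.Gamma ((n : ℝ) + b))) := by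
  set m := min (Real.Gamma b) (b * Real.Gamma b) with hm
  have hmpos : 0 < m := lt_min (Real.Gamma_pos_of_pos hb)
    (mul_pos hb (Real.Gamma_pos_of_pos hb))
  have hsum : Summable (fun n : ℕ => (1 / m) * (|R| ^ n / (n.factorial : ℝ))) :=
    (Real.summable_pow_div_factorial |R|).mul_left _
  refine Summable.of_nonneg_of_le (fun n => by positivity) (fun n => ?_) hsum
  have hG := gammaPos b hb n
  have hfac := facPos n
  have hle : (1:ℝ) / ((n.factorial : ℝ) * Real.Gamma ((n : ℝ) + b)) ≤ 1 / ((n.factorial : ℝ) * m) :=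
    one_div_le_one_div_of_le (by positivity) (mul_le_mul_of_nonneg_left (gamma_lb b hb n) hfac.le)
  have h1 : |R| ^ n / ((n.factorial : ℝ) * Real.Gamma ((n : ℝ) + b))
      ≤ |R| ^ n / ((n.factorial : ℝ) * m) := by
    rw [div_eq_mul_one_div, div_eq_mul_one_div (|R| ^ n)]
    exact mul_le_mul_of_nonneg_left hle (by positivity)
  refine h1.trans_eq ?_
  ring

lemma summable_gFun (b : ℝ) (hb : 0 < b) (x : ℝ) :
    Summable (fun n : ℕ => x ^ n / ((n.factorial : ℝ) * Real.Gamma ((n : ℝ) + b))) := by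
  refine Summable.of_abs ?_
  refine (key_summable b hb x).congr fun n => ?_
  exact (abs_term x _ (mul_pos (facPos n) (gammaPos b hb n)) n).symm

lemma deriv_term_eq (b : ℝ) (hb : 0 < b) (x : ℝ) (n : ℕ) :
    (↑(n + 1) : ℝ) * x ^ n / ((↑(n + 1).factorial : ℝ) * Real.Gamma ((↑(n + 1) : ℝ) + b))
      = x ^ n / ((n.factorial : ℝ) * Real.Gamma ((n : ℝ) + (b + 1))) := by
  have h1 : ((↑(n + 1) : ℝ) + b) = ((n : ℝ) + (b + 1)) := by push_cast; ring
  rw [h1, Nat.factorial_succ]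
  have hG : 0 < Real.Gamma ((n : ℝ) + (b + 1)) := gammaPos (b + 1) (by linarith) n
  have hfac := facPos n
  push_cast
  field_simp

lemma summable_deriv (b : ℝ) (hb : 0 < b) (R : ℝ) :
    Summable (fun n : ℕ =>
      (n : ℝ) * |R| ^ (n - 1) / ((n.factorial : ℝ) * Real.Gamma ((n : ℝ) + b))) := by
  rw [← summable_nat_add_iff 1]
  refine (key_summable (b + 1) (by linarith) R).congr fun n => ?_
  simp only [Nat.add_sub_cancel]
  exact (deriv_term_eq b hb |R| n).symm

lemma summable_deriv' (b : ℝ) (hb : 0 < b) (x : ℝ) :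
    Summable (fun n : ℕ =>
      (n : ℝ) * x ^ (n - 1) / ((n.factorial : ℝ) * Real.Gamma ((n : ℝ) + b))) := by
  refine Summable.of_abs ?_
  refine (summable_deriv b hb x).congr fun n => ?_
  have hc : (0 : ℝ) < (n.factorial : ℝ) * Real.Gamma ((n : ℝ) + b) :=
    mul_pos (facPos n) (gammaPos b hb n)
  exact (abs_term' x _ hc n).symm

lemma tsum_deriv (b : ℝ) (hb : 0 < b) (x : ℝ) :
    (∑' n : ℕ, (n : ℝ) * x ^ (n - 1) / ((n.factorial : ℝ) * Real.Gamma ((n : ℝ) + b)))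
      = gFun (b + 1) x := by
  rw [Summable.tsum_eq_zero_add (summable_deriv' b hb x)]
  simp only [Nat.cast_zero, zero_mul, zero_div, zero_add, Nat.add_sub_cancel]
  exact tsum_congr fun n => deriv_term_eq b hb x n

lemma gFun_hasDerivAt (b : ℝ) (hb : 0 < b) (x : ℝ) :
    HasDerivAt (gFun b) (gFun (b + 1) x) x := by
  set R : ℝ := |x| + 1 with hR
  have hRpos : 0 < R := by positivity
  have hxR : x ∈ Metric.ball (0 : ℝ) R := by
    rw [Metric.mem_ball, Real.dist_eq, sub_zero]
    simp only [hR]; linarith [abs_nonneg x]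
  have hRabs : |R| = R := abs_of_pos hRpos
  have husum : Summable (fun n : ℕ =>
      (n : ℝ) * R ^ (n - 1) / ((n.factorial : ℝ) * Real.Gamma ((n : ℝ) + b))) := by
    have := summable_deriv b hb R
    rwa [hRabs] at this
  have key := hasDerivAt_tsum_of_isPreconnected husum Metric.isOpen_ball
    (convex_ball (0 : ℝ) R).isPreconnected
    (g := fun (n : ℕ) (t : ℝ) => t ^ n / ((n.factorial : ℝ) * Real.Gamma ((n : ℝ) + b)))
    (g' := fun (n : ℕ) (t : ℝ) => (n : ℝ) * t ^ (n - 1) / ((n.factorial : ℝ) * Real.Gamma ((n : ℝ) + b)))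
    (fun n t _ => by
      simpa [mul_comm] using
        (hasDerivAt_pow n t).div_const ((n.factorial : ℝ) * Real.Gamma ((n : ℝ) + b)))
    (fun n t ht => ?_) hxR (summable_gFun b hb x) hxR
  · rw [tsum_deriv b hb x] at key
    exact key
  · have hG := gammaPos b hb n
    have hfac := facPos n
    have hc : (0 : ℝ) < (n.factorial : ℝ) * Real.Gamma ((n : ℝ) + b) := by positivity
    have htR : |t| ≤ R := by
      have := Metric.mem_ball.mp ht
      rw [Real.dist_eq, sub_zero] at this
      linarith
    rw [Real.norm_eq_abs, abs_term' t _ hc n]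
    gcongr

lemma gFun_identity (b : ℝ) (hb : 0 < b) (x : ℝ) :
    gFun b x = b * gFun (b + 1) x + x * gFun (b + 1 + 1) x := by
  have hsb1 := summable_gFun (b + 1) (by linarith : (0:ℝ) < b + 1) x
  have hterm : ∀ n : ℕ, x ^ n / ((n.factorial : ℝ) * Real.Gamma ((n : ℝ) + b))
      = b * (x ^ n / ((n.factorial : ℝ) * Real.Gamma ((n : ℝ) + (b + 1))))
        + x * ((n : ℝ) * x ^ (n - 1) / ((n.factorial : ℝ) * Real.Gamma ((n : ℝ) + (b + 1)))) := by
    intro n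
    match n with
    | 0 =>
      have hG : 0 < Real.Gamma b := Real.Gamma_pos_of_pos hb
      simp only [Nat.cast_zero, pow_zero, Nat.factorial_zero, Nat.cast_one, zero_mul, zero_div,
        mul_zero, add_zero, zero_add, one_mul]
      rw [Real.Gamma_add_one hb.ne']
      field_simp
    | (m + 1) =>
      have hnb : (0 : ℝ) < (↑(m + 1) : ℝ) + b := by positivity
      have hG : 0 < Real.Gamma ((↑(m + 1) : ℝ) + b) := Real.Gamma_pos_of_pos hnb
      have hfac := facPos (m + 1)
      have harg : ((↑(m + 1) : ℝ) + (b + 1)) = ((↑(m + 1) : ℝ) + b) + 1 := by ring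
      simp only [Nat.add_sub_cancel]
      rw [harg, Real.Gamma_add_one hnb.ne']
      field_simp
      ring
  have hs2 : Summable (fun n : ℕ =>
      x * ((n : ℝ) * x ^ (n - 1) / ((n.factorial : ℝ) * Real.Gamma ((n : ℝ) + (b + 1))))) :=
    (summable_deriv' (b + 1) (by linarith) x).mul_left x
  calc gFun b x
      = ∑' n : ℕ, (b * (x ^ n / ((n.factorial : ℝ) * Real.Gamma ((n : ℝ) + (b + 1))))
        + x * ((n : ℝ) * x ^ (n - 1) / ((n.factorial : ℝ) * Real.Gamma ((n : ℝ) + (b + 1))))) := by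
        unfold gFun; exact tsum_congr hterm
    _ = b * gFun (b + 1) x + x * gFun (b + 1 + 1) x := by
        rw [Summable.tsum_add (hsb1.mul_left b) hs2, tsum_mul_left, tsum_mul_left,
          tsum_deriv (b + 1) (by linarith) x]
        rfl

/-- For every `b > 0`, the function `x ↦ x^b · g_b'(x)` is differentiable on `(0,∞)` with
derivative `x^{b-1} · g_b(x)` at every `x > 0`. -/
theorem stmt2 (b : ℝ) (hb : 0 < b) :
    ∀ x : ℝ, 0 < x →
      HasDerivAt (fun t : ℝ => t ^ b * deriv (gFun b) t)
        (x ^ (b - 1) * gFun b x) x := by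
  intro x hx
  have hderiv : deriv (gFun b) = gFun (b + 1) := by
    funext t
    exact (gFun_hasDerivAt b hb t).deriv
  rw [hderiv]
  have h1 : HasDerivAt (fun t : ℝ => t ^ b) (b * x ^ (b - 1)) x := by
    simpa using Real.hasDerivAt_rpow_const (Or.inl hx.ne')
  have h2 : HasDerivAt (gFun (b + 1)) (gFun (b + 1 + 1) x) x :=
    gFun_hasDerivAt (b + 1) (by linarith) x
  refine (h1.mul h2).congr_deriv ?_
  rw [gFun_identity b hb x]
  have hxb : x ^ b = x ^ (b - 1) * x := by
    rw [← Real.rpow_add_one hx.ne' (b - 1)]; ring_nf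
  rw [hxb]
  ring
end
end

section
/- For every b > 0, the function y defined on (0,∞) by y(x) = x^{(1−b)/2}·I(b−1, 2√x) is twice differentiable and satisfies x·y''(x) + b·y'(x) = y(x) for all x > 0. -/
noncomputable section

/-- The modified Bessel function of the first kind,
`I(α, z) = ∑_{k=0}^∞ (z/2)^{2k+α}/(k!·Γ(k+α+1))`. -/
def besselI (α z : ℝ) : ℝ :=
  ∑' k : ℕ, (z / 2) ^ (2 * (k : ℝ) + α) / ((k.factorial : ℝ) * Real.Gamma ((k : ℝ) + α + 1))

/-- `y(x) = x^{(1-b)/2} · I(b-1, 2√x)`. -/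
def yFun (b : ℝ) (x : ℝ) : ℝ :=
  x ^ ((1 - b) / 2) * besselI (b - 1) (2 * Real.sqrt x)


def cc (b : ℝ) (n : ℕ) : ℝ := 1 / (n.factorial * Real.Gamma (n + b))

def Kc (b : ℝ) : ℝ := 1 / min (Real.Gamma b) (Real.Gamma (b + 1))

lemma gamma_nb_pos {b : ℝ} (hb : 0 < b) (n : ℕ) : 0 < Real.Gamma ((n : ℝ) + b) :=
  Real.Gamma_pos_of_pos (by positivity)

lemma cc_pos {b : ℝ} (hb : 0 < b) (n : ℕ) : 0 < cc b n := by
  have := gamma_nb_pos hb n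
  have h2 : (0:ℝ) < n.factorial := by positivity
  unfold cc; positivity

lemma Kc_pos {b : ℝ} (hb : 0 < b) : 0 < Kc b := by
  have h1 := Real.Gamma_pos_of_pos hb
  have h2 := Real.Gamma_pos_of_pos (by linarith : (0:ℝ) < b + 1)
  unfold Kc
  have : 0 < min (Real.Gamma b) (Real.Gamma (b + 1)) := lt_min h1 h2
  positivity

lemma gamma_min_le {b : ℝ} (hb : 0 < b) (n : ℕ) :
    min (Real.Gamma b) (Real.Gamma (b + 1)) ≤ Real.Gamma ((n : ℝ) + b) := by
  induction n with
  | zero => simp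
  | succ m ih =>
    rcases Nat.eq_zero_or_pos m with hm | hm
    · subst hm
      have : ((1:ℕ) : ℝ) + b = b + 1 := by push_cast; ring
      rw [this]
      exact min_le_right _ _
    · have hmb : (1:ℝ) ≤ (m : ℝ) + b := by
        have : (1:ℝ) ≤ (m:ℝ) := by exact_mod_cast hm
        linarith
      have heq : ((m + 1 : ℕ) : ℝ) + b = ((m:ℝ) + b) + 1 := by push_cast; ring
      rw [heq, Real.Gamma_add_one (by linarith : (m:ℝ) + b ≠ 0)]
      calc min (Real.Gamma b) (Real.Gamma (b + 1)) ≤ Real.Gamma ((m:ℝ) + b) := ih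
        _ = 1 * Real.Gamma ((m:ℝ) + b) := by ring
        _ ≤ ((m:ℝ) + b) * Real.Gamma ((m:ℝ) + b) := by
            apply mul_le_mul_of_nonneg_right hmb (gamma_nb_pos hb m).le

lemma cc_le {b : ℝ} (hb : 0 < b) (n : ℕ) : cc b n ≤ Kc b / n.factorial := by
  have hmin : 0 < min (Real.Gamma b) (Real.Gamma (b + 1)) :=
    lt_min (Real.Gamma_pos_of_pos hb) (Real.Gamma_pos_of_pos (by linarith))
  have hΓ := gamma_nb_pos hb n
  have hfac : (0:ℝ) < n.factorial := by positivity
  have h1 : cc b n ≤ 1 / (n.factorial * min (Real.Gamma b) (Real.Gamma (b + 1))) := by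
    apply one_div_le_one_div_of_le (by positivity)
    exact mul_le_mul_of_nonneg_left (gamma_min_le hb n) hfac.le
  calc cc b n ≤ 1 / (n.factorial * min (Real.Gamma b) (Real.Gamma (b + 1))) := h1
    _ = Kc b / n.factorial := by unfold Kc; field_simp

lemma cc_rec {b : ℝ} (hb : 0 < b) (n : ℕ) :
    cc b n = cc b (n + 1) * ((n + 1) * ((n : ℝ) + b)) := by
  have hΓ := gamma_nb_pos hb n
  have hfac : (0:ℝ) < n.factorial := by positivity
  have heq : ((n + 1 : ℕ) : ℝ) + b = ((n:ℝ) + b) + 1 := by push_cast; ring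
  unfold cc
  rw [heq, Real.Gamma_add_one (by positivity : (n:ℝ) + b ≠ 0), Nat.factorial_succ]
  have hnb : (0:ℝ) < (n:ℝ) + b := by positivity
  push_cast
  field_simp

lemma bound0 {b : ℝ} (hb : 0 < b) (n : ℕ) {y R : ℝ} (hy : |y| ≤ R) :
    ‖cc b n * y ^ n‖ ≤ Kc b * (R ^ n / n.factorial) := by
  have hR : 0 ≤ R := (abs_nonneg y).trans hy
  have hfac : (0:ℝ) < n.factorial := by positivity
  rw [Real.norm_eq_abs, abs_mul, abs_of_nonneg (cc_pos hb n).le, abs_pow]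
  calc cc b n * |y| ^ n ≤ (Kc b / n.factorial) * R ^ n := by
        apply mul_le_mul (cc_le hb n) (pow_le_pow_left₀ (abs_nonneg y) hy n)
          (pow_nonneg (abs_nonneg y) n) (div_nonneg (Kc_pos hb).le hfac.le)
    _ = Kc b * (R ^ n / n.factorial) := by ring

lemma bound1 {b : ℝ} (hb : 0 < b) (n : ℕ) {y R : ℝ} (hy : |y| ≤ R) :
    ‖(cc b n * n) * y ^ (n - 1)‖ ≤ Kc b * (R ^ (n - 1) / (n - 1).factorial) := by
  have hR : 0 ≤ R := (abs_nonneg y).trans hy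
  have hK := Kc_pos hb
  match n with
  | 0 =>
    have h0 : (cc b 0 * ((0:ℕ):ℝ)) * y ^ (0-1) = 0 := by simp
    rw [h0, norm_zero]; positivity
  | (m+1) =>
    have hfac : (0:ℝ) < m.factorial := by positivity
    have hc : cc b (m+1) * ((m:ℝ)+1) ≤ Kc b / m.factorial := by
      have h := cc_le hb (m+1)
      rw [Nat.factorial_succ] at h
      push_cast at h
      calc cc b (m+1) * ((m:ℝ)+1) ≤ (Kc b / (((m:ℝ)+1) * m.factorial)) * ((m:ℝ)+1) := by
            apply mul_le_mul_of_nonneg_right h (by positivity)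
        _ = Kc b / m.factorial := by field_simp
    rw [Real.norm_eq_abs, abs_mul, abs_pow]
    have h1 : |cc b (m+1) * ((m+1 : ℕ) : ℝ)| = cc b (m+1) * ((m:ℝ)+1) := by
      rw [abs_of_nonneg (mul_nonneg (cc_pos hb _).le (by positivity))]; push_cast; ring
    rw [h1]
    have h2 : (m + 1) - 1 = m := rfl
    rw [h2]
    calc cc b (m+1) * ((m:ℝ)+1) * |y| ^ m ≤ (Kc b / m.factorial) * R ^ m := by
          apply mul_le_mul hc (pow_le_pow_left₀ (abs_nonneg y) hy m)
            (pow_nonneg (abs_nonneg y) m) (div_nonneg hK.le hfac.le)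
      _ = Kc b * (R ^ m / m.factorial) := by ring

lemma bound2 {b : ℝ} (hb : 0 < b) (n : ℕ) {y R : ℝ} (hy : |y| ≤ R) :
    ‖(cc b n * n * ((n - 1 : ℕ) : ℝ)) * y ^ (n - 2)‖ ≤
      Kc b * (R ^ (n - 2) / (n - 2).factorial) := by
  have hR : 0 ≤ R := (abs_nonneg y).trans hy
  have hK := Kc_pos hb
  match n with
  | 0 =>
    have h0 : (cc b 0 * ((0:ℕ):ℝ) * (((0:ℕ) - 1 : ℕ) : ℝ)) * y ^ (0-2) = 0 := by simp
    rw [h0, norm_zero]; positivity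
  | 1 =>
    have h0 : (cc b 1 * ((1:ℕ):ℝ) * (((1:ℕ) - 1 : ℕ) : ℝ)) * y ^ (1-2) = 0 := by simp
    rw [h0, norm_zero]; positivity
  | (m+2) =>
    have hfac : (0:ℝ) < m.factorial := by positivity
    have hc : cc b (m+2) * ((m:ℝ)+2) * ((m:ℝ)+1) ≤ Kc b / m.factorial := by
      have h := cc_le hb (m+2)
      have hfs : ((m+2).factorial : ℝ) = ((m:ℝ)+2) * (((m:ℝ)+1) * m.factorial) := by
        rw [Nat.factorial_succ, Nat.factorial_succ]; push_cast; ring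
      rw [hfs] at h
      calc cc b (m+2) * ((m:ℝ)+2) * ((m:ℝ)+1)
          ≤ (Kc b / (((m:ℝ)+2) * (((m:ℝ)+1) * m.factorial))) * ((m:ℝ)+2) * ((m:ℝ)+1) := by
            apply mul_le_mul_of_nonneg_right _ (by positivity)
            apply mul_le_mul_of_nonneg_right h (by positivity)
        _ = Kc b / m.factorial := by field_simp
    rw [Real.norm_eq_abs, abs_mul, abs_pow]
    have h1 : |cc b (m+2) * ((m+2 : ℕ) : ℝ) * (((m+2:ℕ) - 1 : ℕ) : ℝ)|
        = cc b (m+2) * ((m:ℝ)+2) * ((m:ℝ)+1) := by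
      rw [abs_of_nonneg (by
        apply mul_nonneg (mul_nonneg (cc_pos hb _).le (by positivity)) (by positivity))]
      push_cast; ring
    rw [h1]
    have h2 : (m + 2) - 2 = m := rfl
    rw [h2]
    calc cc b (m+2) * ((m:ℝ)+2) * ((m:ℝ)+1) * |y| ^ m ≤ (Kc b / m.factorial) * R ^ m := by
          apply mul_le_mul hc (pow_le_pow_left₀ (abs_nonneg y) hy m)
            (pow_nonneg (abs_nonneg y) m) (div_nonneg hK.le hfac.le)
      _ = Kc b * (R ^ m / m.factorial) := by ring

lemma summ0 (K R : ℝ) : Summable (fun n : ℕ => K * (R ^ n / n.factorial)) :=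
  (Real.summable_pow_div_factorial R).mul_left K

lemma summ1 (K R : ℝ) : Summable (fun n : ℕ => K * (R ^ (n-1) / (n-1).factorial)) := by
  apply (summable_nat_add_iff 1).mp
  simpa using summ0 K R

lemma summ2 (K R : ℝ) : Summable (fun n : ℕ => K * (R ^ (n-2) / (n-2).factorial)) := by
  apply (summable_nat_add_iff 2).mp
  simpa using summ0 K R

def fsum (b z : ℝ) : ℝ := ∑' n : ℕ, cc b n * z ^ n
def fsum1 (b z : ℝ) : ℝ := ∑' n : ℕ, (cc b n * n) * z ^ (n - 1)
def fsum2 (b z : ℝ) : ℝ := ∑' n : ℕ, (cc b n * n * ((n - 1 : ℕ) : ℝ)) * z ^ (n - 2)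

lemma summable0 {b : ℝ} (hb : 0 < b) (z : ℝ) : Summable (fun n : ℕ => cc b n * z ^ n) :=
  Summable.of_norm_bounded (summ0 (Kc b) |z|) (fun n => bound0 hb n le_rfl)

lemma summable1 {b : ℝ} (hb : 0 < b) (z : ℝ) :
    Summable (fun n : ℕ => (cc b n * n) * z ^ (n - 1)) :=
  Summable.of_norm_bounded (summ1 (Kc b) |z|) (fun n => bound1 hb n le_rfl)

lemma summable2 {b : ℝ} (hb : 0 < b) (z : ℝ) :
    Summable (fun n : ℕ => (cc b n * n * ((n - 1 : ℕ) : ℝ)) * z ^ (n - 2)) :=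
  Summable.of_norm_bounded (summ2 (Kc b) |z|) (fun n => bound2 hb n le_rfl)

lemma abs_le_of_mem {R y : ℝ} (hy : y ∈ Set.Ioo (-R) R) : |y| ≤ R := by
  rw [Set.mem_Ioo] at hy
  rw [abs_le]; exact ⟨hy.1.le, hy.2.le⟩

lemma self_mem_Ioo (x : ℝ) : x ∈ Set.Ioo (-(|x| + 1)) (|x| + 1) := by
  constructor
  · have := neg_abs_le x; linarith
  · have := le_abs_self x; linarith

lemma hasDerivAt_fsum {b : ℝ} (hb : 0 < b) (x : ℝ) :
    HasDerivAt (fsum b) (fsum1 b x) x :=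
  hasDerivAt_tsum_of_isPreconnected
    (g := fun n z => cc b n * z ^ n)
    (g' := fun n y => (cc b n * n) * y ^ (n - 1))
    (summ1 (Kc b) (|x| + 1)) isOpen_Ioo (convex_Ioo _ _).isPreconnected
    (fun n y _ => by simpa [mul_assoc] using (hasDerivAt_pow n y).const_mul (cc b n))
    (fun n y hy => bound1 hb n (abs_le_of_mem hy))
    (self_mem_Ioo x) (summable0 hb x) (self_mem_Ioo x)

lemma hasDerivAt_fsum1 {b : ℝ} (hb : 0 < b) (x : ℝ) :
    HasDerivAt (fsum1 b) (fsum2 b x) x :=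
  hasDerivAt_tsum_of_isPreconnected
    (g := fun n z => (cc b n * n) * z ^ (n - 1))
    (g' := fun n y => (cc b n * n * ((n - 1 : ℕ) : ℝ)) * y ^ (n - 2))
    (summ2 (Kc b) (|x| + 1)) isOpen_Ioo (convex_Ioo _ _).isPreconnected
    (fun n y _ => by
      have h := (hasDerivAt_pow (n - 1) y).const_mul (cc b n * n)
      have e : n - 1 - 1 = n - 2 := by omega
      rw [e] at h
      simpa [mul_assoc] using h)
    (fun n y hy => bound2 hb n (abs_le_of_mem hy))
    (self_mem_Ioo x) (summable1 hb x) (self_mem_Ioo x)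

lemma ode_fsum {b : ℝ} (hb : 0 < b) (x : ℝ) :
    x * fsum2 b x + b * fsum1 b x = fsum b x := by
  have hS1 := summable1 hb x
  have hS2 := summable2 hb x
  unfold fsum fsum1 fsum2
  rw [← tsum_mul_left, ← tsum_mul_left,
    ← Summable.tsum_add (hS2.mul_left x) (hS1.mul_left b)]
  have hφ : Summable (fun n : ℕ =>
      x * ((cc b n * n * ((n - 1 : ℕ) : ℝ)) * x ^ (n - 2)) +
        b * ((cc b n * n) * x ^ (n - 1))) :=
    (hS2.mul_left x).add (hS1.mul_left b)
  rw [Summable.tsum_eq_zero_add hφ]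
  have h0 : x * ((cc b 0 * (0:ℕ) * (((0:ℕ) - 1 : ℕ) : ℝ)) * x ^ (0 - 2)) +
      b * ((cc b 0 * (0:ℕ)) * x ^ (0 - 1)) = 0 := by simp
  rw [h0, zero_add]
  apply tsum_congr
  intro n
  match n with
  | 0 =>
    have hrec := cc_rec hb 0
    simp only [pow_zero, pow_one, Nat.cast_zero, Nat.cast_one] at hrec ⊢
    simp [hrec]; ring
  | (m+1) =>
    have hrec := cc_rec hb (m+1)
    rw [hrec]
    push_cast
    ring

lemma yFun_eq {b x : ℝ} (hx : 0 < x) : yFun b x = fsum b x := by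
  have hsx : (0:ℝ) < Real.sqrt x := Real.sqrt_pos.2 hx
  unfold yFun besselI fsum
  have h2 : 2 * Real.sqrt x / 2 = Real.sqrt x := by ring
  rw [h2]
  have hterm : ∀ k : ℕ,
      Real.sqrt x ^ (2 * (k : ℝ) + (b - 1)) / ((k.factorial : ℝ) * Real.Gamma ((k : ℝ) + (b - 1) + 1))
        = x ^ ((b - 1) / 2) * (cc b k * x ^ k) := by
    intro k
    have hΓ : (k : ℝ) + (b - 1) + 1 = (k : ℝ) + b := by ring
    have hpow : Real.sqrt x ^ (2 * (k : ℝ) + (b - 1))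
        = x ^ (k : ℕ) * x ^ ((b - 1) / 2) := by
      rw [Real.rpow_add hsx]
      congr 1
      · have : (2 * (k : ℝ)) = ((2 * k : ℕ) : ℝ) := by push_cast; ring
        rw [this, Real.rpow_natCast, pow_mul, Real.sq_sqrt hx.le]
      · rw [Real.sqrt_eq_rpow, ← Real.rpow_mul hx.le]
        congr 1
        ring
    rw [hΓ, hpow]
    unfold cc
    field_simp
  rw [tsum_congr hterm, tsum_mul_left, ← mul_assoc, ← Real.rpow_add hx]
  have he : (1 - b) / 2 + (b - 1) / 2 = 0 := by ring
  rw [he, Real.rpow_zero, one_mul]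

/-- For every `b > 0`, the function `y(x) = x^{(1-b)/2} · I(b-1, 2√x)` is twice differentiable
on `(0,∞)` and satisfies `x·y''(x) + b·y'(x) = y(x)` for all `x > 0`. -/
theorem stmt3 (b : ℝ) (hb : 0 < b) :
    ∀ x : ℝ, 0 < x →
      DifferentiableAt ℝ (yFun b) x ∧ DifferentiableAt ℝ (deriv (yFun b)) x ∧
      x * deriv (deriv (yFun b)) x + b * deriv (yFun b) x = yFun b x := by
  intro x hx
  have hyf : yFun b =ᶠ[nhds x] fsum b :=
    Filter.eventuallyEq_of_mem (Ioi_mem_nhds hx) (fun y hy => yFun_eq (Set.mem_Ioi.mp hy))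
  have hD1 : ∀ y, HasDerivAt (fsum b) (fsum1 b y) y := hasDerivAt_fsum hb
  have hderiv_f : deriv (fsum b) = fsum1 b := funext fun y => (hD1 y).deriv
  have hd1 : DifferentiableAt ℝ (yFun b) x :=
    ((hD1 x).differentiableAt).congr_of_eventuallyEq hyf
  have hderiv_y : deriv (yFun b) =ᶠ[nhds x] fsum1 b := hderiv_f ▸ hyf.deriv
  have hD2 : HasDerivAt (fsum1 b) (fsum2 b x) x := hasDerivAt_fsum1 hb x
  have hd2 : DifferentiableAt ℝ (deriv (yFun b)) x :=
    hD2.differentiableAt.congr_of_eventuallyEq hderiv_y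
  refine ⟨hd1, hd2, ?_⟩
  have e1 : deriv (yFun b) x = fsum1 b x := hderiv_y.eq_of_nhds
  have e2 : deriv (deriv (yFun b)) x = fsum2 b x := by
    rw [hderiv_y.deriv_eq]; exact hD2.deriv
  rw [e1, e2, yFun_eq hx]
  exact ode_fsum hb x
end
end

section
/- For every x ∈ Ω, the mixture density satisfies h(x) = e^{−tr(x)}/((2π)^{r(r−1)/4}·√(det x)) · ∏_{i=1}^r [ (√λ_i · e^{−λ_i}) / √(Δ_{i−1}(x)) · I(1, 2√(λ_i·Δ_i(x)/Δ_{i−1}(x))) ], where the series defining h(x) converges. -/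
open MeasureTheory Matrix

noncomputable section

instance (r : ℕ) : MeasurableSpace (Matrix (Fin r) (Fin r) ℝ) :=
  inferInstanceAs (MeasurableSpace (Fin r → Fin r → ℝ))

/-- Embedding of `Fin k` into `Fin r` as the first `k` indices. -/
def leadEmb (r k : ℕ) (h : k ≤ r) : Fin k → Fin r :=
  fun j => ⟨j.val, lt_of_lt_of_le j.isLt h⟩

/-- Embedding of `Fin k` into `Fin r` as the last `k` indices. -/
def trailEmb (r k : ℕ) (h : k ≤ r) : Fin k → Fin r :=
  fun j => ⟨r - k + j.val, by have := j.isLt; omega⟩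

/-- `Δ_k(x)`: determinant of the leading principal `k × k` submatrix (`Δ_0 = 1`). -/
def Delta (r k : ℕ) (x : Matrix (Fin r) (Fin r) ℝ) : ℝ :=
  if h : k ≤ r then (x.submatrix (leadEmb r k h) (leadEmb r k h)).det else 0

/-- `Δ*_k(x)`: determinant of the trailing principal `k × k` submatrix (`Δ*_0 = 1`). -/
def DeltaStar (r k : ℕ) (x : Matrix (Fin r) (Fin r) ℝ) : ℝ :=
  if h : k ≤ r then (x.submatrix (trailEmb r k h) (trailEmb r k h)).det else 0

/-- The generalized power `Δ_s(x) = Δ_1(x)^{s_1-s_2} ⋯ Δ_{r-1}(x)^{s_{r-1}-s_r} Δ_r(x)^{s_r}`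
(indices of `s` are `0`-based in the formalization). -/
def GenPow (r : ℕ) (s : Fin r → ℝ) (x : Matrix (Fin r) (Fin r) ℝ) : ℝ :=
  ∏ i : Fin r,
    Delta r (i.val + 1) x ^ (s i - if h : i.val + 1 < r then s ⟨i.val + 1, h⟩ else 0)

/-- The general term (indexed by `q ∈ ℕ^r`) of the series defining the mixture density:
`λ^q · Δ_{q+ρ-(n/r,…,n/r)}(x) / (q! · (2π)^{r(r-1)/4} · Γ(q_1)⋯Γ(q_r))`.
Here `ρ = (0, 1/2, …, (r-1)/2)` and `n/r = (r+1)/2`.  Terms with some `q_i = 0` vanish,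
since `Real.Gamma 0 = 0` and division by `0` yields `0` (the convention `1/Γ(0) = 0`). -/
def mixTerm (r : ℕ) (lam : Fin r → ℝ) (x : Matrix (Fin r) (Fin r) ℝ) (q : Fin r → ℕ) : ℝ :=
  (∏ i, lam i ^ q i) *
      GenPow r (fun i => (q i : ℝ) + (i.val : ℝ) / 2 - ((r : ℝ) + 1) / 2) x /
    ((∏ i, ((q i).factorial : ℝ)) * (2 * Real.pi) ^ (((r * (r - 1) : ℕ) : ℝ) / 4) *
      ∏ i, Real.Gamma ((q i : ℝ)))

/-- The mixture density `h(x) = e^{-(λ_1+⋯+λ_r)} e^{-tr x} ∑_{q} mixTerm q`. -/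
def mixDensity (r : ℕ) (lam : Fin r → ℝ) (x : Matrix (Fin r) (Fin r) ℝ) : ℝ :=
  Real.exp (-∑ i, lam i) * Real.exp (-x.trace) * ∑' q : Fin r → ℕ, mixTerm r lam x q

/-- `Ω`: the open cone of symmetric positive definite real `r × r` matrices. -/
def PDCone (r : ℕ) : Set (Matrix (Fin r) (Fin r) ℝ) := {x | x.IsSymm ∧ x.PosDef}

/-- Coordinates on symmetric matrices: the entries `x_{ij}`, `i ≤ j`. -/
abbrev SymIdx (r : ℕ) := {p : Fin r × Fin r // p.1 ≤ p.2}

/-- The symmetric matrix with prescribed entries `x_{ij}`, `i ≤ j`. -/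
def symOfCoords (r : ℕ) (f : SymIdx r → ℝ) : Matrix (Fin r) (Fin r) ℝ :=
  Matrix.of fun i j => if h : i ≤ j then f ⟨(i, j), h⟩ else f ⟨(j, i), le_of_not_ge h⟩

/-- The Lebesgue measure on the space of symmetric `r × r` matrices, normalized so that it is
the Euclidean measure associated with the trace inner product `⟨x,y⟩ = tr(xy)`
(an orthonormal basis is `{c_ii} ∪ {(e_ij+e_ji)/√2 : i<j}`, whence the factor `√2^{r(r-1)/2}`
relative to the coordinates `x_{ij}`, `i ≤ j`). -/
def lebSym (r : ℕ) : Measure (Matrix (Fin r) (Fin r) ℝ) :=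
  ENNReal.ofReal (Real.sqrt 2 ^ (r * (r - 1) / 2)) • Measure.map (symOfCoords r) volume

/-- The Laplace transform `L_μ(θ) = ∫_Ω e^{tr(θx)} h(x) dx` of the mixture. -/
def mixLaplace (r : ℕ) (lam : Fin r → ℝ) (θ : Matrix (Fin r) (Fin r) ℝ) : ℝ :=
  ∫ x in PDCone r, Real.exp ((θ * x).trace) * mixDensity r lam x ∂lebSym r

/-- `P_θ`: the probability measure on `Ω` with Lebesgue density
`e^{tr(θx)} h(x) / L_μ(θ)`. -/
def mixNEF (r : ℕ) (lam : Fin r → ℝ) (θ : Matrix (Fin r) (Fin r) ℝ) :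
    Measure (Matrix (Fin r) (Fin r) ℝ) :=
  ((lebSym r).restrict (PDCone r)).withDensity fun x =>
    ENNReal.ofReal (Real.exp ((θ * x).trace) * mixDensity r lam x / mixLaplace r lam θ)

/-- The mean `m(θ) = ∫_Ω x dP_θ(x)` (computed entrywise). -/
def mixMean (r : ℕ) (lam : Fin r → ℝ) (θ : Matrix (Fin r) (Fin r) ℝ) :
    Matrix (Fin r) (Fin r) ℝ :=
  Matrix.of fun i j => ∫ x, x i j ∂mixNEF r lam θ

/-- `(P*_k(x))⁻¹`: the `r × r` symmetric matrix whose trailing `k × k` block is the inverse of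
the trailing principal `k × k` submatrix of `x`, all other entries being `0`
(`(P*_0(x))⁻¹ = 0`). -/
def PstarInv (r k : ℕ) (x : Matrix (Fin r) (Fin r) ℝ) : Matrix (Fin r) (Fin r) ℝ :=
  if h : k ≤ r then
    Matrix.of fun i j =>
      if hij : r - k ≤ i.val ∧ r - k ≤ j.val then
        (x.submatrix (trailEmb r k h) (trailEmb r k h))⁻¹
          ⟨i.val - (r - k), by have := i.isLt; omega⟩
          ⟨j.val - (r - k), by have := j.isLt; omega⟩
      else 0
  else 0

/-- `b_i(m) = (i-1)/4 + √(((i-1)/4)² + λ_i Δ_i(m)/Δ_{i-1}(m))` (`i : Fin r` is `0`-based,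
so `(i-1)` in the `1`-based notation reads `i.val` here). -/
def bFun (r : ℕ) (lam : Fin r → ℝ) (i : Fin r) (m : Matrix (Fin r) (Fin r) ℝ) : ℝ :=
  (i.val : ℝ) / 4 +
    Real.sqrt (((i.val : ℝ) / 4) ^ 2 + lam i * (Delta r (i.val + 1) m / Delta r i.val m))

section Helpers

lemma posDef_submatrix {r k : ℕ} {M : Matrix (Fin r) (Fin r) ℝ} (hM : M.PosDef)
    (f : Fin k → Fin r) (hf : Function.Injective f) : (M.submatrix f f).PosDef := by
  exact hM.submatrix hf

lemma Delta_pos {r k : ℕ} (hk : k ≤ r) {x : Matrix (Fin r) (Fin r) ℝ} (hx : x ∈ PDCone r) :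
    0 < Delta r k x := by
  rw [Delta, dif_pos hk]
  refine Matrix.PosDef.det_pos (posDef_submatrix hx.2 _ ?_)
  intro a b hab
  simpa [leadEmb, Fin.ext_iff] using hab

lemma Delta_zero (r : ℕ) (x : Matrix (Fin r) (Fin r) ℝ) : Delta r 0 x = 1 := by
  rw [Delta, dif_pos (Nat.zero_le r)]
  exact Matrix.det_fin_zero

lemma Delta_last (r : ℕ) (x : Matrix (Fin r) (Fin r) ℝ) : Delta r r x = x.det := by
  rw [Delta, dif_pos le_rfl]
  have h : x.submatrix (leadEmb r r le_rfl) (leadEmb r r le_rfl) = x := by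
    ext i j
    simp [leadEmb, Matrix.submatrix_apply]
  rw [h]

lemma prod_rpow_telescope (r : ℕ) (b : ℕ → ℝ) (hb : ∀ k, k ≤ r → 0 < b k)
    (hb0 : b 0 = 1) (s : ℕ → ℝ) (hs : s r = 0) :
    ∏ i : Fin r, b (i.val + 1) ^ (s i.val - s (i.val + 1)) =
      ∏ i : Fin r, (b (i.val + 1) / b i.val) ^ s i.val := by
  rw [Fin.prod_univ_eq_prod_range (fun k => b (k+1) ^ (s k - s (k+1))) r,
      Fin.prod_univ_eq_prod_range (fun k => (b (k+1) / b k) ^ s k) r]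
  have h1 : ∀ i ∈ Finset.range r, b (i+1) ^ (s i - s (i+1)) = b (i+1) ^ s i / b (i+1) ^ s (i+1) :=
    fun i hi => Real.rpow_sub (hb _ (Finset.mem_range.mp hi)) _ _
  have h2 : ∀ i ∈ Finset.range r, (b (i+1) / b i) ^ s i = b (i+1) ^ s i / b i ^ s i :=
    fun i hi => Real.div_rpow (hb _ (Finset.mem_range.mp hi)).le
      (hb i (le_of_lt (Finset.mem_range.mp hi))).le _
  rw [Finset.prod_congr rfl h1, Finset.prod_congr rfl h2, Finset.prod_div_distrib,
      Finset.prod_div_distrib]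
  congr 1
  have hF0 : b 0 ^ s 0 = 1 := by rw [hb0, Real.one_rpow]
  have hFr : b r ^ s r = 1 := by rw [hs, Real.rpow_zero]
  have e1 := Finset.prod_range_succ' (fun k => b k ^ s k) r
  rw [Finset.prod_range_succ (fun k => b k ^ s k) r, hF0, hFr, mul_one, mul_one] at e1
  exact e1.symm

lemma GenPow_eq (r : ℕ) (x : Matrix (Fin r) (Fin r) ℝ) (hx : x ∈ PDCone r) (s : Fin r → ℝ) :
    GenPow r s x = ∏ i : Fin r, (Delta r (i.val + 1) x / Delta r i.val x) ^ s i := by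
  set sN : ℕ → ℝ := fun k => if h : k < r then s ⟨k, h⟩ else 0 with hsN
  have h1 : GenPow r s x = ∏ i : Fin r, Delta r (i.val+1) x ^ (sN i.val - sN (i.val+1)) := by
    unfold GenPow
    refine Finset.prod_congr rfl fun i _ => ?_
    congr 1
    simp [hsN, i.isLt]
  have h2 := prod_rpow_telescope r (fun k => Delta r k x) (fun k hk => Delta_pos hk hx)
      (Delta_zero r x) sN (by simp [hsN])
  rw [h1, h2]
  refine Finset.prod_congr rfl fun i _ => ?_
  congr 1
  simp [hsN, i.isLt]

lemma gseries (t : ℝ) (ht : 0 < t) :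
    Summable (fun q : ℕ => t ^ q / (q.factorial * Real.Gamma (q : ℝ))) ∧
    (∑' q : ℕ, t ^ q / (q.factorial * Real.Gamma (q : ℝ)))
      = Real.sqrt t * besselI 1 (2 * Real.sqrt t) := by
  set g : ℕ → ℝ := fun q => t ^ q / (q.factorial * Real.Gamma (q : ℝ)) with hg
  have hg0 : g 0 = 0 := by simp [hg, Real.Gamma_zero]
  have hgs : ∀ k : ℕ, g (k + 1) = t ^ (k+1) / ((k+1).factorial * k.factorial) := by
    intro k
    have : Real.Gamma ((k + 1 : ℕ) : ℝ) = k.factorial := by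
      push_cast
      exact_mod_cast Real.Gamma_nat_eq_factorial k
    simp only [hg, this]
  have hnn : ∀ q, 0 ≤ g q := by
    intro q
    exact div_nonneg (pow_nonneg ht.le _)
      (mul_nonneg (Nat.cast_nonneg _) (Real.Gamma_nonneg_of_nonneg (Nat.cast_nonneg _)))
  have hsum : Summable g := by
    refine Summable.of_nonneg_of_le hnn ?_ (Real.summable_pow_div_factorial t)
    intro q
    cases q with
    | zero => simp [hg0]
    | succ k =>
        rw [hgs k]
        have h1 : (1:ℝ) ≤ k.factorial := by exact_mod_cast Nat.one_le_iff_ne_zero.mpr k.factorial_ne_zero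
        have h2 : (0:ℝ) < (k+1).factorial := by exact_mod_cast (k+1).factorial_pos
        exact div_le_div_of_nonneg_left (pow_nonneg ht.le _) h2 (by nlinarith)
  refine ⟨hsum, ?_⟩
  have hst : Real.sqrt t * Real.sqrt t = t := Real.mul_self_sqrt ht.le
  have hbe : besselI 1 (2 * Real.sqrt t)
      = ∑' k : ℕ, Real.sqrt t * t ^ k / (k.factorial * (k+1).factorial) := by
    rw [besselI]
    refine tsum_congr fun k => ?_
    have h2 : 2 * Real.sqrt t / 2 = Real.sqrt t := by ring
    have hexp : (2 * (k:ℝ) + 1) = ((2*k+1 : ℕ) : ℝ) := by push_cast; ring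
    have hGam : Real.Gamma ((k:ℝ) + 1 + 1) = (k+1).factorial := by
      have := Real.Gamma_nat_eq_factorial (k+1)
      push_cast at this ⊢
      linarith
    rw [h2, hexp, Real.rpow_natCast, hGam]
    congr 1
    rw [pow_succ, pow_mul, Real.sq_sqrt ht.le, mul_comm]
  rw [hbe, ← tsum_mul_left, hsum.tsum_eq_zero_add, hg0, zero_add]
  refine tsum_congr fun k => ?_
  rw [hgs k]
  symm
  calc Real.sqrt t * (Real.sqrt t * t ^ k / (k.factorial * (k+1).factorial))
      = (Real.sqrt t * Real.sqrt t) * t ^ k / (k.factorial * (k+1).factorial) := by ring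
    _ = t ^ (k+1) / ((k+1).factorial * k.factorial) := by rw [hst]; rw [pow_succ]; ring

lemma pi_prod_tsum : ∀ (n : ℕ) (g : Fin n → ℕ → ℝ), (∀ i k, 0 ≤ g i k) → (∀ i, Summable (g i)) →
    Summable (fun q : Fin n → ℕ => ∏ i, g i (q i)) ∧
    (∑' q : Fin n → ℕ, ∏ i, g i (q i)) = ∏ i, ∑' k, g i k := by
  intro n
  induction n with
  | zero =>
      intro g _ _
      have h1 : (fun q : Fin 0 → ℕ => ∏ i, g i (q i)) = fun _ => 1 := by
        funext q; simp
      constructor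
      · rw [h1]; exact .of_finite
      · rw [h1]
        rw [tsum_eq_single (f := fun _ : Fin 0 → ℕ => (1:ℝ)) (fun (i : Fin 0) => (0:ℕ))
            (fun b' hb' => absurd (funext fun i => i.elim0) hb')]
        simp
  | succ n ih =>
      intro g hnn hs
      obtain ⟨hGs, hGt⟩ := ih (fun i => g i.succ) (fun i k => hnn _ k) (fun i => hs _)
      set G : (Fin n → ℕ) → ℝ := fun f => ∏ i : Fin n, g i.succ (f i) with hG
      have hGnn : ∀ f, 0 ≤ G f := fun f => Finset.prod_nonneg fun i _ => hnn _ _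
      let e : (ℕ × (Fin n → ℕ)) ≃ (Fin (n+1) → ℕ) := Fin.consEquiv (fun _ => ℕ)
      have key : ∀ p : ℕ × (Fin n → ℕ),
          (∏ i : Fin (n+1), g i ((e p) i)) = g 0 p.1 * G p.2 := by
        intro p
        rw [Fin.prod_univ_succ]
        simp [e, Fin.consEquiv, hG]
      have hprod : Summable (fun p : ℕ × (Fin n → ℕ) => g 0 p.1 * G p.2) :=
        (hs 0).mul_of_nonneg hGs (fun k => hnn 0 k) hGnn
      have hsum : Summable (fun q : Fin (n+1) → ℕ => ∏ i, g i (q i)) := by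
        rw [← e.summable_iff]
        refine hprod.congr fun p => (key p).symm
      refine ⟨hsum, ?_⟩
      rw [← e.tsum_eq, tsum_congr key]
      have habs1 : Summable fun k => ‖g 0 k‖ := by
        refine (hs 0).congr fun k => ?_
        rw [Real.norm_of_nonneg (hnn 0 k)]
      have habs2 : Summable fun f => ‖G f‖ := by
        refine hGs.congr fun f => ?_
        rw [Real.norm_of_nonneg (hGnn f)]
      rw [← tsum_mul_tsum_of_summable_norm habs1 habs2, Fin.prod_univ_succ, hGt]

end Helpers

/-- Theorem 3.2: for `x ∈ Ω` the series defining the mixture density converges and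
`h(x) = e^{-tr(x)}/((2π)^{r(r-1)/4} √(det x)) ·
  ∏_{i=1}^r (√λ_i e^{-λ_i}/√(Δ_{i-1}(x))) · I(1, 2√(λ_i Δ_i(x)/Δ_{i-1}(x)))`. -/
theorem stmt4 (r : ℕ) (hr : 1 ≤ r) (lam : Fin r → ℝ) (hlam : ∀ i, 0 < lam i)
    (x : Matrix (Fin r) (Fin r) ℝ) (hx : x ∈ PDCone r) :
    Summable (mixTerm r lam x) ∧
    mixDensity r lam x =
      Real.exp (-x.trace) /
          ((2 * Real.pi) ^ (((r * (r - 1) : ℕ) : ℝ) / 4) * Real.sqrt x.det) *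
        ∏ i : Fin r,
          Real.sqrt (lam i) * Real.exp (-lam i) / Real.sqrt (Delta r i.val x) *
            besselI 1 (2 * Real.sqrt (lam i * (Delta r (i.val + 1) x / Delta r i.val x))) := by
    classical
  have hDpos : ∀ k, k ≤ r → 0 < Delta r k x := fun k hk => Delta_pos hk hx
  set P : ℝ := (2 * Real.pi) ^ (((r * (r - 1) : ℕ) : ℝ) / 4) with hP
  have hPpos : 0 < P := Real.rpow_pos_of_pos (by positivity) _
  set d : Fin r → ℝ := fun i => Delta r (i.val + 1) x / Delta r i.val x with hd
  have hdg : ∀ i : Fin r, Delta r (i.val + 1) x / Delta r i.val x = d i := fun i => rfl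
  simp only [hdg]
  have hdpos : ∀ i, 0 < d i := fun i => div_pos (hDpos _ i.isLt) (hDpos _ (le_of_lt i.isLt))
  set ci : Fin r → ℝ := fun i => (i.val : ℝ) / 2 - ((r : ℝ) + 1) / 2 with hci
  set g : Fin r → ℕ → ℝ :=
    fun i q => (lam i * d i) ^ q / (q.factorial * Real.Gamma (q : ℝ)) with hgdef
  set K : ℝ := (∏ i, d i ^ ci i) / P with hK
  -- factorization of the general term
  have hfac : ∀ q : Fin r → ℕ, mixTerm r lam x q = K * ∏ i, g i (q i) := by
    intro q
    unfold mixTerm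
    rw [← hP]
    rw [show (fun i : Fin r => (q i : ℝ) + (i.val : ℝ) / 2 - ((r : ℝ) + 1) / 2)
        = fun i : Fin r => (q i : ℝ) + ci i from funext fun i => by rw [hci]; ring]
    rw [GenPow_eq r x hx]
    have hsplit : ∀ i : Fin r, (Delta r (i.val + 1) x / Delta r i.val x) ^
        ((q i : ℝ) + ci i) = d i ^ (q i) * d i ^ ci i := by
      intro i
      rw [hdg i, Real.rpow_add (hdpos i), Real.rpow_natCast]
    rw [Finset.prod_congr rfl fun i _ => hsplit i]
    simp only [hgdef, hK, mul_pow, div_eq_mul_inv, mul_inv, Finset.prod_mul_distrib,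
      Finset.prod_inv_distrib]
    ring
  have hgpos : ∀ i, 0 < lam i * d i := fun i => mul_pos (hlam i) (hdpos i)
  have hgser := fun i => gseries (lam i * d i) (hgpos i)
  have hgnn : ∀ i k, 0 ≤ g i k := fun i k =>
    div_nonneg (pow_nonneg (hgpos i).le _)
      (mul_nonneg (Nat.cast_nonneg _) (Real.Gamma_nonneg_of_nonneg (Nat.cast_nonneg _)))
  obtain ⟨hS, hT⟩ := pi_prod_tsum r g hgnn (fun i => (hgser i).1)
  have hsummable : Summable (mixTerm r lam x) :=
    (hS.mul_left K).congr fun q => (hfac q).symm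
  refine ⟨hsummable, ?_⟩
  -- compute the sum
  have htsum : (∑' q : Fin r → ℕ, mixTerm r lam x q)
      = K * ∏ i, Real.sqrt (lam i * d i) * besselI 1 (2 * Real.sqrt (lam i * d i)) := by
    rw [tsum_congr hfac, tsum_mul_left, hT]
    congr 1
    exact Finset.prod_congr rfl fun (i : Fin r) _ => (hgser i).2
  -- the key product identity
  have hprodkey : (∏ i : Fin r, d i ^ ci i) * (∏ i : Fin r, Real.sqrt (d i))
      = (Real.sqrt x.det)⁻¹ * (∏ i : Fin r, Real.sqrt (Delta r i.val x))⁻¹ := by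
    set sN : ℕ → ℝ := fun k => ((k : ℝ) - r) / 2 with hsN
    have h2 : ∀ i : Fin r, d i ^ (ci i + 1 / 2 : ℝ) = d i ^ (sN i.val) := by
      intro i
      congr 1
      rw [hci, hsN]
      push_cast
      ring
    have h4 : ∀ i : Fin r, (Delta r (i.val + 1) x : ℝ) ^ (sN i.val - sN (i.val + 1))
        = Delta r (i.val + 1) x ^ (-(1/2) : ℝ) := by
      intro i
      congr 1
      rw [hsN]
      push_cast
      ring
    have h6 : ∏ i : Fin r, Real.sqrt (Delta r (i.val + 1) x)
        = Real.sqrt x.det * ∏ i : Fin r, Real.sqrt (Delta r i.val x) := by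
      rw [Fin.prod_univ_eq_prod_range (fun k => Real.sqrt (Delta r (k + 1) x)) r,
          Fin.prod_univ_eq_prod_range (fun k => Real.sqrt (Delta r k x)) r]
      have e1 := Finset.prod_range_succ' (fun k => Real.sqrt (Delta r k x)) r
      rw [Finset.prod_range_succ (fun k => Real.sqrt (Delta r k x)) r, Delta_last,
          Delta_zero, Real.sqrt_one, mul_one] at e1
      rw [← e1, mul_comm]
    calc (∏ i : Fin r, d i ^ ci i) * (∏ i : Fin r, Real.sqrt (d i))
        = ∏ i : Fin r, d i ^ (ci i + 1 / 2 : ℝ) := by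
          rw [← Finset.prod_mul_distrib]
          exact Finset.prod_congr rfl fun i _ => by
            rw [Real.rpow_add (hdpos i), Real.sqrt_eq_rpow]
      _ = ∏ i : Fin r, d i ^ (sN i.val) := Finset.prod_congr rfl fun i _ => h2 i
      _ = ∏ i : Fin r, Delta r (i.val + 1) x ^ (sN i.val - sN (i.val + 1)) :=
          (prod_rpow_telescope r (fun k => Delta r k x) hDpos (Delta_zero r x) sN
            (by rw [hsN]; simp)).symm
      _ = ∏ i : Fin r, Delta r (i.val + 1) x ^ (-(1/2) : ℝ) :=
          Finset.prod_congr rfl fun i _ => h4 i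
      _ = (∏ i : Fin r, Real.sqrt (Delta r (i.val + 1) x))⁻¹ := by
          rw [← Finset.prod_inv_distrib]
          exact Finset.prod_congr rfl fun i _ => by
            rw [Real.rpow_neg (hDpos _ i.isLt).le, Real.sqrt_eq_rpow]
      _ = (Real.sqrt x.det)⁻¹ * (∏ i : Fin r, Real.sqrt (Delta r i.val x))⁻¹ := by
          rw [h6, mul_inv]
  -- final assembly
  unfold mixDensity
  rw [htsum]
  have hexp : Real.exp (-∑ i, lam i) = ∏ i, Real.exp (-lam i) := by
    have h : (-∑ i, lam i) = ∑ i, -lam i := by simp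
    rw [h, Real.exp_sum]
  have hsqrtsplit : ∀ i : Fin r, Real.sqrt (lam i * d i)
      = Real.sqrt (lam i) * Real.sqrt (d i) := fun i => Real.sqrt_mul (hlam i).le _
  rw [hexp, hK]
  simp only [hsqrtsplit]
  simp only [div_eq_mul_inv, mul_inv, Finset.prod_mul_distrib, Finset.prod_inv_distrib]
  linear_combination (Real.exp (-x.trace) * P⁻¹ * (∏ i : Fin r, Real.sqrt (lam i)) *
    (∏ i : Fin r, Real.exp (-lam i)) *
    (∏ i : Fin r, besselI 1 (2 * (Real.sqrt (lam i) * Real.sqrt (d i))))) * hprodkey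
end
end
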